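/- arXiv:1406.1001 — 4 statements merged into one kernel-verified Lean document; each statement's English description precedes it below -/
import Mathlib

section
/- Let p > 1, A ∈ ℝ^{m×n}, W_k ∈ ℝ^{n×k}, L ∈ ℝ^{l×n}, and b ∈ ℝ^m. Let B denote the set of minimizers over z ∈ ℝ^n of ‖(A W_k W_kᵀ) z − b‖₂. Then the problem min_{x ∈ B} ‖Lx‖_p has a unique minimizer if and only if N(A W_k W_kᵀ) ∩ N(L) = {0}, where N(·) denotes the null space. -/
open Matrix

section Aux

lemma abs_rpow_mid_le {p : ℝ} (hp : 1 < p) (a c : ℝ) :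
    |(a + c) / 2| ^ p ≤ (|a| ^ p + |c| ^ p) / 2 := by
  have h1 : |(a + c) / 2| ≤ (|a| + |c|) / 2 := by
    rw [abs_div, abs_two]; gcongr; exact abs_add_le a c
  have h2 : |(a + c) / 2| ^ p ≤ ((|a| + |c|) / 2) ^ p :=
    Real.rpow_le_rpow (abs_nonneg _) h1 (by linarith)
  refine h2.trans ?_
  have := (convexOn_rpow hp.le).2 (Set.mem_Ici.2 (abs_nonneg a)) (Set.mem_Ici.2 (abs_nonneg c))
    (by norm_num : (0:ℝ) ≤ 1/2) (by norm_num : (0:ℝ) ≤ 1/2) (by norm_num)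
  simp only [smul_eq_mul] at this
  calc ((|a| + |c|) / 2) ^ p = (1/2 * |a| + 1/2 * |c|) ^ p := by ring_nf
    _ ≤ 1/2 * |a| ^ p + 1/2 * |c| ^ p := this
    _ = (|a| ^ p + |c| ^ p) / 2 := by ring

lemma abs_rpow_mid_lt {p : ℝ} (hp : 1 < p) {a c : ℝ} (h : a ≠ c) :
    |(a + c) / 2| ^ p < (|a| ^ p + |c| ^ p) / 2 := by
  by_cases hac : |a| = |c|
  · have hc : c ≠ 0 := by
      rintro rfl; simp only [abs_zero, abs_eq_zero] at hac; exact h (by simp [hac])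
    have ha : a = -c := by
      rcases abs_eq_abs.1 hac with h1 | h1
      · exact absurd h1 h
      · exact h1
    subst ha
    have h0 : |(-c + c) / 2| ^ p = 0 := by
      simp [Real.zero_rpow (by linarith : p ≠ 0)]
    rw [h0]
    have : 0 < |c| ^ p := Real.rpow_pos_of_pos (abs_pos.2 hc) p
    rw [abs_neg]; linarith
  · have h2 : |(a + c) / 2| ^ p ≤ ((|a| + |c|) / 2) ^ p :=
      Real.rpow_le_rpow (abs_nonneg _) (by rw [abs_div, abs_two]; gcongr; exact abs_add_le a c)
        (by linarith)
    refine h2.trans_lt ?_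
    have := (strictConvexOn_rpow hp).2 (Set.mem_Ici.2 (abs_nonneg a))
      (Set.mem_Ici.2 (abs_nonneg c)) hac
      (by norm_num : (0:ℝ) < 1/2) (by norm_num : (0:ℝ) < 1/2) (by norm_num)
    simp only [smul_eq_mul] at this
    calc ((|a| + |c|) / 2) ^ p = (1/2 * |a| + 1/2 * |c|) ^ p := by ring_nf
      _ < 1/2 * |a| ^ p + 1/2 * |c| ^ p := this
      _ = (|a| ^ p + |c| ^ p) / 2 := by ring

lemma exists_lsq_min {m n : ℕ} (M : Matrix (Fin m) (Fin n) ℝ) (b : Fin m → ℝ) :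
    ∃ x₀ : Fin n → ℝ, ∀ z : Fin n → ℝ,
      (∑ i, (M.mulVec x₀ - b) i ^ 2) ≤ (∑ i, (M.mulVec z - b) i ^ 2) := by
  classical
  set T : (Fin n → ℝ) →ₗ[ℝ] EuclideanSpace ℝ (Fin m) :=
    (WithLp.linearEquiv 2 ℝ (Fin m → ℝ)).symm.toLinearMap ∘ₗ M.mulVecLin with hT
  set K : Submodule ℝ (EuclideanSpace ℝ (Fin m)) := LinearMap.range T with hK
  set b' : EuclideanSpace ℝ (Fin m) := (WithLp.equiv 2 (Fin m → ℝ)).symm b with hb'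
  obtain ⟨x₀, hx₀⟩ := LinearMap.mem_range.1 (K.orthogonalProjectionOnto b').2
  refine ⟨x₀, fun z => ?_⟩
  have key : ‖b' - T x₀‖ ≤ ‖b' - T z‖ := by
    rw [hx₀, show ((K.orthogonalProjectionOnto b' : K) : EuclideanSpace ℝ (Fin m)) = K.starProjection b' from rfl, Submodule.starProjection_minimal]
    exact ciInf_le ⟨0, fun r ⟨y, hy⟩ => hy ▸ norm_nonneg _⟩ (⟨T z, LinearMap.mem_range_self T z⟩ : K)
  have hnorm : ∀ x : Fin n → ℝ, ‖b' - T x‖ = Real.sqrt (∑ i, (M.mulVec x - b) i ^ 2) := by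
    intro x
    rw [EuclideanSpace.norm_eq]
    congr 1
    apply Finset.sum_congr rfl
    intro i _
    have : (b' - T x) i = b i - M.mulVec x i := rfl
    rw [this, Real.norm_eq_abs, sq_abs, Pi.sub_apply]
    ring
  rw [hnorm, hnorm] at key
  have h1 : (0:ℝ) ≤ ∑ i, (M.mulVec z - b) i ^ 2 := by positivity
  exact (Real.sqrt_le_sqrt_iff h1).1 key

lemma pi_norm_rpow_le_sum {l : ℕ} (u : Fin l → ℝ) {p : ℝ} (hp : 0 < p) :
    ‖u‖ ^ p ≤ ∑ i, |u i| ^ p := by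
  rcases isEmpty_or_nonempty (Fin l) with h | h
  · simp [Pi.norm_def, Real.zero_rpow hp.ne']
  · obtain ⟨i, -, hi⟩ := Finset.exists_mem_eq_sup Finset.univ Finset.univ_nonempty
      (fun i => ‖u i‖₊)
    have hn : ‖u‖ = |u i| := by
      rw [Pi.norm_def, hi]; simp [Real.norm_eq_abs]
    rw [hn]
    exact Finset.single_le_sum (fun j _ => Real.rpow_nonneg (abs_nonneg _) p) (Finset.mem_univ i)

end Aux

/-- Theorem 2.2: the modified projection problem `min_{x ∈ B} ‖L x‖_p`, where `B` is
the set of minimizers of `‖(A W_k W_kᵀ) z - b‖₂`, has a unique minimizer if and only if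
`N(A W_k W_kᵀ) ∩ N(L) = {0}`. -/
theorem stmt_4 (m n k l : ℕ) (p : ℝ) (hp : 1 < p)
    (A : Matrix (Fin m) (Fin n) ℝ) (Wk : Matrix (Fin n) (Fin k) ℝ)
    (L : Matrix (Fin l) (Fin n) ℝ) (b : Fin m → ℝ)
    (B : Set (Fin n → ℝ))
    (hB : B = {x : Fin n → ℝ | ∀ z : Fin n → ℝ,
      Real.sqrt (∑ i, ((A * Wk * Wkᵀ).mulVec x - b) i ^ 2) ≤
        Real.sqrt (∑ i, ((A * Wk * Wkᵀ).mulVec z - b) i ^ 2)}) :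
    (∃! x : Fin n → ℝ, x ∈ B ∧ ∀ y ∈ B,
        (∑ i, |(L.mulVec x) i| ^ p) ^ (1 / p) ≤ (∑ i, |(L.mulVec y) i| ^ p) ^ (1 / p)) ↔
      (∀ x : Fin n → ℝ, (A * Wk * Wkᵀ).mulVec x = 0 → L.mulVec x = 0 → x = 0) := by
  classical
  have hp0 : (0:ℝ) < p := by linarith
  set M : Matrix (Fin m) (Fin n) ℝ := A * Wk * Wkᵀ with hMdef
  set S : (Fin n → ℝ) → ℝ := fun x => ∑ i, (M.mulVec x - b) i ^ 2 with hSdef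
  set g : (Fin n → ℝ) → ℝ := fun x => ∑ i, |(L.mulVec x) i| ^ p with hgdef
  have hgs : ∀ x : Fin n → ℝ, (∑ i, |(L.mulVec x) i| ^ p) = g x := fun _ => rfl
  have hSnonneg : ∀ x, 0 ≤ S x := fun x => by positivity
  have hgnonneg : ∀ x, 0 ≤ g x := fun x =>
    Finset.sum_nonneg fun i _ => Real.rpow_nonneg (abs_nonneg _) _
  have hBmem : ∀ x, x ∈ B ↔ ∀ z, S x ≤ S z := by
    intro x; rw [hB]; simp only [Set.mem_setOf_eq]
    constructor
    · intro h z; exact (Real.sqrt_le_sqrt_iff (hSnonneg z)).1 (h z)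
    · intro h z; exact Real.sqrt_le_sqrt (h z)
  have hSM : ∀ x y, M.mulVec x = M.mulVec y → S x = S y := by
    intro x y h; simp only [hSdef, h]
  -- all members of B have the same image under M
  have hMB : ∀ x ∈ B, ∀ y ∈ B, M.mulVec x = M.mulVec y := by
    intro x hx y hy
    by_contra hne
    set zm : Fin n → ℝ := (2:ℝ)⁻¹ • (x + y) with hzm
    have hmul : M.mulVec zm = (2:ℝ)⁻¹ • (M.mulVec x + M.mulVec y) := by
      rw [hzm, M.mulVec_smul, M.mulVec_add]
    have hx' := (hBmem x).1 hx zm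
    have hy' := (hBmem y).1 hy zm
    have hid : S zm = (S x + S y)/2 - (1/4) * ∑ i, (M.mulVec x - M.mulVec y) i ^ 2 := by
      have hpt : ∀ i, (M.mulVec zm - b) i ^ 2 =
          ((M.mulVec x - b) i ^ 2 + (M.mulVec y - b) i ^ 2) / 2
            - (1/4) * (M.mulVec x - M.mulVec y) i ^ 2 := by
        intro i
        rw [hmul]
        simp only [Pi.sub_apply, Pi.smul_apply, Pi.add_apply, smul_eq_mul]
        ring
      simp only [hSdef]
      rw [Finset.sum_congr rfl fun i _ => hpt i]
      rw [Finset.sum_sub_distrib, ← Finset.sum_div, Finset.sum_add_distrib, ← Finset.mul_sum]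
    have hQ : 0 < ∑ i, (M.mulVec x - M.mulVec y) i ^ 2 := by
      obtain ⟨i, hi⟩ := Function.ne_iff.1 hne
      refine Finset.sum_pos' (fun j _ => by positivity) ⟨i, Finset.mem_univ i, ?_⟩
      have : (M.mulVec x - M.mulVec y) i ≠ 0 := sub_ne_zero.2 hi
      positivity
    linarith
  have hBof : ∀ x ∈ B, ∀ y, M.mulVec y = M.mulVec x → y ∈ B := by
    intro x hx y hxy
    rw [hBmem] at hx ⊢
    intro z; rw [hSM y x hxy]; exact hx z
  constructor
  · rintro ⟨x, ⟨hxB, hxmin⟩, huniq⟩ v hMv hLv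
    have h1 : x + v ∈ B := by
      refine hBof x hxB (x + v) ?_
      rw [M.mulVec_add, hMv, add_zero]
    have h2 : L.mulVec (x + v) = L.mulVec x := by
      rw [L.mulVec_add, hLv, add_zero]
    have h3 : x + v = x := by
      refine huniq (x + v) ⟨h1, fun y hy => ?_⟩
      rw [h2]; exact hxmin y hy
    exact add_eq_left.mp h3
  · intro hN
    obtain ⟨x₀, hx₀S⟩ := exists_lsq_min M b
    have hx₀B : x₀ ∈ B := (hBmem x₀).2 hx₀S
    -- closedness of B
    have hMcont : Continuous fun x : Fin n → ℝ => M.mulVec x := by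
      have := LinearMap.continuous_of_finiteDimensional (M.mulVecLin)
      simpa [Matrix.mulVecLin_apply, Matrix.coe_mulVecLin] using this
    have hLcont : Continuous fun x : Fin n → ℝ => L.mulVec x := by
      have := LinearMap.continuous_of_finiteDimensional (L.mulVecLin)
      simpa [Matrix.mulVecLin_apply, Matrix.coe_mulVecLin] using this
    have hBeq : B = {x | M.mulVec x = M.mulVec x₀} := by
      ext x
      constructor
      · intro hx; exact hMB x hx x₀ hx₀B
      · intro hx; exact hBof x₀ hx₀B x hx
    have hBclosed : IsClosed B := by
      rw [hBeq]
      exact isClosed_eq hMcont continuous_const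
    -- continuity of g
    have hgcont : Continuous g := by
      apply continuous_finset_sum
      intro i _
      exact (((continuous_apply i).comp hLcont).abs).rpow_const fun x => Or.inr hp0.le
    -- antilipschitz bound
    set J : (Fin n → ℝ) →ₗ[ℝ] (Fin m → ℝ) × (Fin l → ℝ) :=
      (M.mulVecLin).prod (L.mulVecLin) with hJ
    have hJker : LinearMap.ker J = ⊥ := by
      rw [LinearMap.ker_eq_bot']
      intro u hu
      rw [hJ, LinearMap.prod_apply] at hu
      have h1 := congrArg Prod.fst hu
      have h2 := congrArg Prod.snd hu
      simp only [Function.prod, Matrix.mulVecLin_apply] at h1 h2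
      exact hN u h1 h2
    obtain ⟨c, hc0, hcJ⟩ := J.exists_antilipschitzWith hJker
    have hlow : ∀ x : Fin n → ℝ, ‖x‖ ≤ (c : ℝ) * (‖M.mulVec x‖ + ‖L.mulVec x‖) := by
      intro x
      have h1 : dist x 0 ≤ (c : ℝ) * dist (J x) (J 0) := hcJ.le_mul_dist x 0
      rw [dist_eq_norm, sub_zero, dist_eq_norm, map_zero, sub_zero] at h1
      refine h1.trans ?_
      have h2 : ‖J x‖ ≤ ‖M.mulVec x‖ + ‖L.mulVec x‖ := by
        rw [hJ, LinearMap.prod_apply]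
        refine (Prod.norm_def _).le.trans ?_
        simp only [Function.prod, Matrix.mulVecLin_apply]
        exact max_le (le_add_of_nonneg_right (norm_nonneg _))
          (le_add_of_nonneg_left (norm_nonneg _))
      have : (0:ℝ) ≤ (c:ℝ) := c.2
      nlinarith [norm_nonneg (J x)]
    -- coercivity of g on B
    set R : ℝ := (c : ℝ) * (‖M.mulVec x₀‖ + (g x₀) ^ (1/p)) with hR
    have hcoer : ∀ x ∈ B, R < ‖x‖ → g x₀ ≤ g x := by
      intro x hxB hRx
      have hMx : M.mulVec x = M.mulVec x₀ := hMB x hxB x₀ hx₀B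
      have h1 : ‖x‖ ≤ (c : ℝ) * (‖M.mulVec x₀‖ + ‖L.mulVec x‖) := by
        rw [← hMx]; exact hlow x
      have hcpos : (0:ℝ) < c := hc0
      have h2 : (g x₀) ^ (1/p) ≤ ‖L.mulVec x‖ := by
        by_contra hcon
        push_neg at hcon
        have : ‖x‖ < R := by
          calc ‖x‖ ≤ (c : ℝ) * (‖M.mulVec x₀‖ + ‖L.mulVec x‖) := h1
            _ < R := by rw [hR]; have := hcon; nlinarith
        linarith
      have h3 : ((g x₀) ^ (1/p)) ^ p ≤ ‖L.mulVec x‖ ^ p :=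
        Real.rpow_le_rpow (Real.rpow_nonneg (hgnonneg x₀) _) h2 hp0.le
      have h4 : ((g x₀) ^ (1/p)) ^ p = g x₀ := by
        rw [one_div, Real.rpow_inv_rpow (hgnonneg x₀) hp0.ne']
      have h5 : ‖L.mulVec x‖ ^ p ≤ g x := pi_norm_rpow_le_sum (L.mulVec x) hp0
      linarith
    -- existence of minimizer of g on B
    have hev : ∀ᶠ x in Filter.cocompact (Fin n → ℝ) ⊓ Filter.principal B, g x₀ ≤ g x := by
      rw [Filter.eventually_inf_principal]
      have hev2 : ∀ᶠ x in Filter.cocompact (Fin n → ℝ), R < ‖x‖ :=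
        tendsto_norm_cocompact_atTop.eventually (Filter.eventually_gt_atTop R)
      exact hev2.mono fun x hx hxB => hcoer x hxB hx
    obtain ⟨xs, hxsB, hxsmin⟩ :=
      hgcont.continuousOn.exists_isMinOn' hBclosed hx₀B hev
    have hxsmin' : ∀ y ∈ B, g xs ≤ g y := fun y hy => hxsmin hy
    -- translate to the rpow form
    have hobj : ∀ x' y', g x' ≤ g y' →
        (∑ i, |(L.mulVec x') i| ^ p) ^ (1 / p) ≤ (∑ i, |(L.mulVec y') i| ^ p) ^ (1 / p) := by
      intro x' y' h
      rw [hgs, hgs]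
      exact Real.rpow_le_rpow (hgnonneg x') h (by positivity)
    have hobj' : ∀ x' y',
        (∑ i, |(L.mulVec x') i| ^ p) ^ (1 / p) ≤ (∑ i, |(L.mulVec y') i| ^ p) ^ (1 / p) →
        g x' ≤ g y' := by
      intro x' y' h
      rw [hgs, hgs] at h
      exact (Real.rpow_le_rpow_iff (hgnonneg x') (hgnonneg y') (by positivity : (0:ℝ) < 1/p)).1 h
    refine ⟨xs, ⟨hxsB, fun y hy => hobj xs y (hxsmin' y hy)⟩, ?_⟩
    rintro y ⟨hyB, hymin⟩
    have hymin' : ∀ z ∈ B, g y ≤ g z := fun z hz => hobj' y z (hymin z hz)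
    have hgy : g y = g xs := le_antisymm (hymin' xs hxsB) (hxsmin' y hyB)
    -- show L.mulVec y = L.mulVec xs
    have hLeq : L.mulVec y = L.mulVec xs := by
      by_contra hLne
      set zm : Fin n → ℝ := (2:ℝ)⁻¹ • (y + xs) with hzm
      have hMyxs : M.mulVec y = M.mulVec xs := hMB y hyB xs hxsB
      have hMzm : M.mulVec zm = M.mulVec y := by
        rw [hzm, M.mulVec_smul, M.mulVec_add, ← hMyxs]
        funext i
        simp only [Pi.smul_apply, Pi.add_apply, smul_eq_mul]
        ring
      have hzmB : zm ∈ B := hBof y hyB zm hMzm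
      have hLzm : ∀ i, (L.mulVec zm) i = ((L.mulVec y) i + (L.mulVec xs) i) / 2 := by
        intro i
        rw [hzm, L.mulVec_smul, L.mulVec_add]
        simp only [Pi.smul_apply, Pi.add_apply, smul_eq_mul]
        ring
      obtain ⟨i₀, hi₀⟩ := Function.ne_iff.1 hLne
      have hlt : g zm < (g y + g xs) / 2 := by
        have hsum : g zm = ∑ i, |((L.mulVec y) i + (L.mulVec xs) i) / 2| ^ p := by
          simp only [hgdef]
          exact Finset.sum_congr rfl fun i _ => by rw [hLzm i]
        rw [hsum]
        have hstep : ∑ i, |((L.mulVec y) i + (L.mulVec xs) i) / 2| ^ p <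
            ∑ i, (|(L.mulVec y) i| ^ p + |(L.mulVec xs) i| ^ p) / 2 := by
          refine Finset.sum_lt_sum (fun i _ => abs_rpow_mid_le hp _ _)
            ⟨i₀, Finset.mem_univ i₀, abs_rpow_mid_lt hp hi₀⟩
        refine hstep.trans_le ?_
        rw [← Finset.sum_div, Finset.sum_add_distrib]
      have hle := hymin' zm hzmB
      linarith [hle, hlt, hgy]
    have hMeq : M.mulVec (y - xs) = 0 := by
      rw [M.mulVec_sub, hMB y hyB xs hxsB, sub_self]
    have hLeq0 : L.mulVec (y - xs) = 0 := by
      rw [L.mulVec_sub, hLeq, sub_self]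
    have := hN (y - xs) hMeq hLeq0
    exact sub_eq_zero.1 this
end

section
/- Let p > 1, A ∈ ℝ^{m×n}, b ∈ ℝ^m, and L ∈ ℝ^{l×n} with null space N(L) = span{e}, where e is the all-ones vector. Let W_k ∈ ℝ^{n×k} have orthonormal columns whose first column is e/‖e‖₂, and let B be the set of minimizers over z of ‖(A W_k W_kᵀ) z − b‖₂. Then min_{x ∈ B} ‖Lx‖_p has a unique minimizer if and only if A e ≠ 0 (equivalently, e ∉ N(A)). -/
open Matrix Filter

lemma aux_rpow_conv' {p : ℝ} (hp : 1 < p) (a b : ℝ) :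
    |(a + b) / 2| ^ p ≤ (|a| ^ p + |b| ^ p) / 2 := by
  have hp0 : (0:ℝ) ≤ p := by linarith
  have h1 : |(a + b) / 2| ≤ (|a| + |b|) / 2 := by
    rw [abs_div, abs_of_pos (by norm_num : (0:ℝ) < 2)]
    have := abs_add_le a b
    linarith
  have hcv := (strictConvexOn_rpow hp).convexOn
  have h2 := hcv.2 (Set.mem_Ici.2 (abs_nonneg a)) (Set.mem_Ici.2 (abs_nonneg b))
      (by norm_num : (0:ℝ) ≤ 1/2) (by norm_num : (0:ℝ) ≤ 1/2) (by norm_num)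
  simp only [smul_eq_mul] at h2
  have h3 : (1/2) * |a| + (1/2) * |b| = (|a| + |b|) / 2 := by ring
  rw [h3] at h2
  calc |(a+b)/2| ^ p ≤ ((|a|+|b|)/2) ^ p := Real.rpow_le_rpow (abs_nonneg _) h1 hp0
    _ ≤ (|a|^p + |b|^p)/2 := by linarith

lemma aux_rpow_strict {p : ℝ} (hp : 1 < p) {a b : ℝ} (hab : a ≠ b) :
    |(a + b) / 2| ^ p < (|a| ^ p + |b| ^ p) / 2 := by
  have hp0 : (0:ℝ) < p := by linarith
  by_cases h : |a| = |b|
  · have hb : b = -a := by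
      rcases abs_eq_abs.1 h with h' | h'
      · exact absurd h' hab
      · linarith
    have ha : a ≠ 0 := by
      rintro rfl
      simp [hb] at hab
    have hz : (a + b) / 2 = 0 := by rw [hb]; ring
    rw [hz, abs_zero, Real.zero_rpow (ne_of_gt hp0)]
    have : (0:ℝ) < |a| ^ p := Real.rpow_pos_of_pos (abs_pos.2 ha) p
    rw [← h]
    linarith
  · have h1 : |(a + b) / 2| ≤ (|a| + |b|) / 2 := by
      rw [abs_div, abs_of_pos (by norm_num : (0:ℝ) < 2)]
      have := abs_add_le a b
      linarith
    have h2 := (strictConvexOn_rpow hp).2 (Set.mem_Ici.2 (abs_nonneg a))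
      (Set.mem_Ici.2 (abs_nonneg b)) h
      (by norm_num : (0:ℝ) < 1/2) (by norm_num : (0:ℝ) < 1/2) (by norm_num)
    simp only [smul_eq_mul] at h2
    have h3 : (1/2) * |a| + (1/2) * |b| = (|a| + |b|) / 2 := by ring
    rw [h3] at h2
    calc |(a+b)/2| ^ p ≤ ((|a|+|b|)/2) ^ p := Real.rpow_le_rpow (abs_nonneg _) h1 hp0.le
      _ < (|a|^p + |b|^p)/2 := by linarith

set_option maxHeartbeats 1000000 in
/-- Theorem 2.4: with a DCT-like signal subspace (orthonormal columns of `W_k` whose first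
column is the normalized all-ones vector `e/‖e‖₂`) and `N(L) = span{e}`, the modified
projection problem has a unique minimizer if and only if `A e ≠ 0`. -/
theorem stmt_9 (m n k l : ℕ) (hk : 0 < k) (p : ℝ) (hp : 1 < p)
    (A : Matrix (Fin m) (Fin n) ℝ) (b : Fin m → ℝ)
    (L : Matrix (Fin l) (Fin n) ℝ)
    (e : Fin n → ℝ) (he : e = fun _ => (1 : ℝ))
    (hL : {x : Fin n → ℝ | L.mulVec x = 0} = (Submodule.span ℝ {e} : Set (Fin n → ℝ)))
    (Wk : Matrix (Fin n) (Fin k) ℝ)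
    (hWkOrtho : ∀ i j : Fin k, ∑ t, Wk t i * Wk t j = if i = j then (1 : ℝ) else 0)
    (hWkFirst : ∀ t : Fin n, Wk t ⟨0, hk⟩ = e t / Real.sqrt (∑ s, e s ^ 2))
    (B : Set (Fin n → ℝ))
    (hB : B = {x : Fin n → ℝ | ∀ z : Fin n → ℝ,
      Real.sqrt (∑ i, ((A * Wk * Wkᵀ).mulVec x - b) i ^ 2) ≤
        Real.sqrt (∑ i, ((A * Wk * Wkᵀ).mulVec z - b) i ^ 2)}) :
    (∃! x : Fin n → ℝ, x ∈ B ∧ ∀ y ∈ B,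
        (∑ i, |(L.mulVec x) i| ^ p) ^ (1 / p) ≤ (∑ i, |(L.mulVec y) i| ^ p) ^ (1 / p)) ↔
      A.mulVec e ≠ 0 := by
  classical
  have hp0 : (0:ℝ) < p := lt_trans one_pos hp
  -- `n` is positive
  have hn : 0 < n := by
    rcases Nat.eq_zero_or_pos n with h0 | h
    · exfalso
      have h1 := hWkOrtho ⟨0, hk⟩ ⟨0, hk⟩
      rw [if_pos rfl] at h1
      subst h0
      simpa using h1
    · exact h
  set M := A * Wk * Wkᵀ with hM
  have he1 : ∀ t, e t = 1 := fun t => by rw [he]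
  have hesq : ∑ s, e s ^ 2 = (n : ℝ) := by simp [he]
  set c := Real.sqrt (n : ℝ) with hcdef
  have hcpos : (0:ℝ) < c := Real.sqrt_pos.2 (by exact_mod_cast hn)
  have hcne : c ≠ 0 := ne_of_gt hcpos
  have hWk0 : ∀ t, Wk t ⟨0, hk⟩ = 1 / c := by
    intro t; rw [hWkFirst t, hesq, he1]
  -- column sums of Wk
  have hcol : ∀ j, ∑ t, Wk t j = if j = (⟨0, hk⟩ : Fin k) then c else 0 := by
    intro j
    have h1 := hWkOrtho j ⟨0, hk⟩
    simp only [hWk0] at h1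
    rw [← Finset.sum_mul] at h1
    split_ifs at h1 ⊢ with hj
    · field_simp at h1
      exact h1
    · field_simp at h1
      simpa using h1
  -- Wk Wkᵀ fixes e
  have hWWe : (Wk * Wkᵀ).mulVec e = e := by
    funext t
    have h1 : (Wk * Wkᵀ).mulVec e t = ∑ x, ∑ j, Wk t j * Wk x j := by
      simp [Matrix.mulVec, dotProduct, Matrix.mul_apply, he1, Matrix.transpose_apply]
    rw [h1, Finset.sum_comm]
    have h2 : ∀ j ∈ Finset.univ, ∑ x, Wk t j * Wk x j
        = Wk t j * (if j = (⟨0, hk⟩ : Fin k) then c else 0) := by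
      intro j _
      rw [← Finset.mul_sum, hcol j]
    rw [Finset.sum_congr rfl h2]
    simp only [mul_ite, mul_zero, Finset.sum_ite_eq', Finset.mem_univ, if_true]
    rw [hWk0, he1]
    field_simp
  have hMe : M.mulVec e = A.mulVec e := by
    rw [hM, Matrix.mul_assoc, ← Matrix.mulVec_mulVec, hWWe]
  have hLe : L.mulVec e = 0 := by
    have : e ∈ {x : Fin n → ℝ | L.mulVec x = 0} := by
      rw [hL]
      exact Submodule.mem_span_singleton_self e
    exact this
  have hspan : ∀ x : Fin n → ℝ, L.mulVec x = 0 → ∃ t : ℝ, x = t • e := by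
    intro x hx
    have hx' : x ∈ (Submodule.span ℝ {e} : Set (Fin n → ℝ)) := by rw [← hL]; exact hx
    rcases Submodule.mem_span_singleton.1 hx' with ⟨t, ht⟩
    exact ⟨t, ht.symm⟩
  -- membership in B via sums of squares
  have hBmem : ∀ x, x ∈ B ↔ ∀ z, (∑ i, (M.mulVec x - b) i ^ 2) ≤ ∑ i, (M.mulVec z - b) i ^ 2 := by
    intro x
    rw [hB]
    simp only [Set.mem_setOf_eq]
    constructor
    · intro h z
      have h' := h z
      rwa [Real.sqrt_le_sqrt_iff (Finset.sum_nonneg fun i _ => sq_nonneg _)] at h'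
    · intro h z
      exact Real.sqrt_le_sqrt (h z)
  have hBofEq : ∀ x ∈ B, ∀ y, M.mulVec y = M.mulVec x → y ∈ B := by
    intro x hx y hxy
    rw [hBmem] at hx ⊢
    intro z
    rw [hxy]
    exact hx z
  -- any two elements of B have the same image under M
  have hBMeq : ∀ x ∈ B, ∀ y ∈ B, M.mulVec x = M.mulVec y := by
    intro x hx y hy
    rw [hBmem] at hx hy
    set u := M.mulVec x with hu
    set v := M.mulVec y with hv
    have hz : M.mulVec ((1/2 : ℝ) • (x + y)) = (1/2 : ℝ) • (u + v) := by
      rw [Matrix.mulVec_smul, Matrix.mulVec_add]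
    have hxz := hx ((1/2 : ℝ) • (x + y))
    have hxy1 := hx y
    have hyx1 := hy x
    rw [hz] at hxz
    have key : ∀ i ∈ Finset.univ, ((u - v) i / 2) ^ 2 =
        (((u - b) i ^ 2 + (v - b) i ^ 2) / 2 - (((1/2:ℝ) • (u + v) - b) i) ^ 2) := by
      intro i _
      simp only [Pi.sub_apply, Pi.add_apply, Pi.smul_apply, smul_eq_mul]
      ring
    have hsplit : ∑ i, ((u - v) i / 2) ^ 2
        = (∑ i, (u - b) i ^ 2 + ∑ i, (v - b) i ^ 2) / 2
          - ∑ i, ((1/2:ℝ) • (u + v) - b) i ^ 2 := by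
      rw [Finset.sum_congr rfl key, Finset.sum_sub_distrib, ← Finset.sum_add_distrib,
        ← Finset.sum_div]
    have hle0 : ∑ i, ((u - v) i / 2) ^ 2 ≤ 0 := by
      rw [hsplit]
      have h2 : ∑ i, (u - b) i ^ 2 ≤ ∑ i, ((1/2:ℝ) • (u + v) - b) i ^ 2 := hxz
      have h3 : ∑ i, (u - b) i ^ 2 ≤ ∑ i, (v - b) i ^ 2 := hxy1
      have h4 : ∑ i, (v - b) i ^ 2 ≤ ∑ i, (u - b) i ^ 2 := hyx1
      linarith
    have hz0 : ∑ i, ((u - v) i / 2) ^ 2 = 0 :=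
      le_antisymm hle0 (Finset.sum_nonneg fun i _ => sq_nonneg _)
    have hall := (Finset.sum_eq_zero_iff_of_nonneg (fun i _ => sq_nonneg ((u - v) i / 2))).1 hz0
    funext i
    have h5 := hall i (Finset.mem_univ i)
    have h6 : (u - v) i / 2 = 0 := by
      exact pow_eq_zero_iff (by norm_num) |>.1 h5
    have h7 : u i - v i = 0 := by
      have : (u - v) i = 0 := by linarith
      simpa [Pi.sub_apply] using this
    linarith
  -- B is nonempty (least squares solutions exist)
  have hBne : ∃ x₀, x₀ ∈ B := by
    let T : (Fin n → ℝ) →ₗ[ℝ] EuclideanSpace ℝ (Fin m) :=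
      (WithLp.linearEquiv 2 ℝ (Fin m → ℝ)).symm.toLinearMap ∘ₗ M.mulVecLin
    let S : Submodule ℝ (EuclideanSpace ℝ (Fin m)) := LinearMap.range T
    have hSc : IsComplete (S : Set (EuclideanSpace ℝ (Fin m))) :=
      S.closed_of_finiteDimensional.isComplete
    obtain ⟨v, hvS, hvmin⟩ := exists_norm_eq_iInf_of_complete_convex
      ⟨0, S.zero_mem⟩ hSc S.convex ((WithLp.linearEquiv 2 ℝ (Fin m → ℝ)).symm b)
    obtain ⟨x₀, hx₀⟩ := hvS
    have hnorm : ∀ w : Fin n → ℝ,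
        ‖(WithLp.linearEquiv 2 ℝ (Fin m → ℝ)).symm b - T w‖
          = Real.sqrt (∑ i, (M.mulVec w - b) i ^ 2) := by
      intro w
      rw [EuclideanSpace.norm_eq]
      congr 1
      apply Finset.sum_congr rfl
      intro i _
      have h1 : ((WithLp.linearEquiv 2 ℝ (Fin m → ℝ)).symm b - T w) i
          = b i - M.mulVec w i := rfl
      rw [h1, Real.norm_eq_abs, sq_abs]
      have h2 : (M.mulVec w - b) i = M.mulVec w i - b i := rfl
      rw [h2]
      ring
    refine ⟨x₀, ?_⟩
    rw [hB]
    intro z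
    calc Real.sqrt (∑ i, (M.mulVec x₀ - b) i ^ 2)
        = ‖(WithLp.linearEquiv 2 ℝ (Fin m → ℝ)).symm b - v‖ := by rw [← hnorm x₀, hx₀]
      _ ≤ ‖(WithLp.linearEquiv 2 ℝ (Fin m → ℝ)).symm b - T z‖ := by
          rw [hvmin]
          exact ciInf_le ⟨0, Set.forall_mem_range.2 fun _ => norm_nonneg _⟩
            (⟨T z, LinearMap.mem_range_self T z⟩ : S)
      _ = Real.sqrt (∑ i, (M.mulVec z - b) i ^ 2) := hnorm z
  -- the p-norm as a genuine norm
  haveI hfact : Fact (1 ≤ ENNReal.ofReal p) := ⟨ENNReal.one_le_ofReal.2 hp.le⟩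
  set P := ENNReal.ofReal p with hPdef
  have hPtoReal : P.toReal = p := ENNReal.toReal_ofReal hp0.le
  set EQ := (WithLp.linearEquiv P ℝ (∀ _ : Fin l, ℝ)).symm with hEQ
  have hEQapp : ∀ (w : Fin l → ℝ) (i : Fin l), (EQ w : PiLp P fun _ : Fin l => ℝ) i = w i :=
    fun w i => rfl
  have hNp : ∀ w : Fin l → ℝ, ‖EQ w‖ = (∑ i, |w i| ^ p) ^ (1/p) := by
    intro w
    have hterm : ∀ i ∈ Finset.univ, ‖(EQ w : PiLp P fun _ : Fin l => ℝ) i‖ ^ p = |w i| ^ p := by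
      intro i _
      rw [hEQapp, Real.norm_eq_abs]
    rw [PiLp.norm_eq_sum (by rw [hPtoReal]; exact hp0) (EQ w), hPtoReal,
      Finset.sum_congr rfl hterm]
  constructor
  · -- uniqueness forces A e ≠ 0
    rintro ⟨x, ⟨hxB, hxmin⟩, huniq⟩ hAe0
    have hexB : x + e ∈ B := by
      apply hBofEq x hxB
      rw [Matrix.mulVec_add, hMe, hAe0, add_zero]
    have hLxe : L.mulVec (x + e) = L.mulVec x := by
      rw [Matrix.mulVec_add, hLe, add_zero]
    have hcontr : x + e = x := by
      apply huniq
      refine ⟨hexB, ?_⟩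
      intro y hy
      rw [hLxe]
      exact hxmin y hy
    have he0 := congrFun hcontr ⟨0, hn⟩
    simp only [Pi.add_apply, he1] at he0
    linarith
  · -- A e ≠ 0 gives a unique minimizer
    intro hAe
    obtain ⟨x₀, hx₀B⟩ := hBne
    set V : Submodule ℝ (Fin n → ℝ) := LinearMap.ker M.mulVecLin with hV
    have hmemV : ∀ w : Fin n → ℝ, w ∈ V ↔ M.mulVec w = 0 := by
      intro w
      rw [hV, LinearMap.mem_ker, Matrix.mulVecLin_apply]
    set ψ : V →ₗ[ℝ] PiLp P (fun _ : Fin l => ℝ) :=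
      (WithLp.linearEquiv P ℝ (∀ _ : Fin l, ℝ)).symm.toLinearMap ∘ₗ L.mulVecLin ∘ₗ V.subtype
      with hψ
    have hψapp : ∀ v : V, ψ v = EQ (L.mulVec (v : Fin n → ℝ)) := fun v => rfl
    -- lengths of e and injectivity plumbing
    have hsmul0 : ∀ t : ℝ, M.mulVec (t • e) = 0 → t = 0 := by
      intro t ht
      rw [Matrix.mulVec_smul, hMe] at ht
      rcases smul_eq_zero.1 ht with h | h
      · exact h
      · exact absurd h hAe
    have hψker : LinearMap.ker ψ = ⊥ := by
      rw [eq_bot_iff]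
      intro v hv
      have h1 : ψ v = 0 := LinearMap.mem_ker.1 hv
      rw [hψapp] at h1
      have h2 : L.mulVec (v : Fin n → ℝ) = 0 := (LinearEquiv.map_eq_zero_iff EQ).1 h1
      rcases hspan _ h2 with ⟨t, ht⟩
      have h3 : M.mulVec (v : Fin n → ℝ) = 0 := (hmemV _).1 v.2
      rw [ht] at h3
      have h4 := hsmul0 t h3
      have h5 : (v : Fin n → ℝ) = 0 := by rw [ht, h4, zero_smul]
      have h6 : v = 0 := Subtype.ext h5
      rw [h6]
      exact Submodule.zero_mem ⊥
    obtain ⟨K, hK0, hKa⟩ := ψ.exists_antilipschitzWith hψker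
    set c0 : PiLp P (fun _ : Fin l => ℝ) := EQ (L.mulVec x₀) with hc0
    have hcont : Continuous fun v : V => ‖c0 + ψ v‖ :=
      (continuous_const.add ψ.continuous_of_finiteDimensional).norm
    have hlow : ∀ v : V, (K : ℝ)⁻¹ * ‖v‖ - ‖c0‖ ≤ ‖c0 + ψ v‖ := by
      intro v
      have h1 : ‖v‖ ≤ (K : ℝ) * ‖ψ v‖ := by
        have h := hKa.le_mul_dist v 0
        simpa [dist_zero_right, map_zero] using h
      have h2 : ‖ψ v‖ ≤ ‖c0 + ψ v‖ + ‖c0‖ := by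
        have h3 := norm_sub_le (c0 + ψ v) c0
        have h4 : c0 + ψ v - c0 = ψ v := by abel
        rw [h4] at h3
        exact h3
      have hKpos : (0:ℝ) < K := hK0
      have h4 : (K : ℝ)⁻¹ * ‖v‖ ≤ ‖ψ v‖ := by
        rw [inv_mul_le_iff₀ hKpos]
        exact h1
      linarith
    have htl : Tendsto (fun v : V => (K : ℝ)⁻¹ * ‖v‖ - ‖c0‖) (cocompact V) atTop := by
      haveI : ProperSpace ↥V := FiniteDimensional.proper_real _
      have h := tendsto_norm_cocompact_atTop (E := ↥V)
      have h2 := h.const_mul_atTop (show (0:ℝ) < (K : ℝ)⁻¹ by positivity)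
      simpa [sub_eq_add_neg] using tendsto_atTop_add_const_right _ (-‖c0‖) h2
    haveI : Nonempty V := ⟨0⟩
    obtain ⟨v₀, hv₀⟩ := hcont.exists_forall_le (tendsto_atTop_mono hlow htl)
    -- value bridge
    have hval : ∀ v : V, ‖c0 + ψ v‖ = ‖EQ (L.mulVec (x₀ + (v : Fin n → ℝ)))‖ := by
      intro v
      rw [hψapp, hc0, ← map_add, ← Matrix.mulVec_add]
    have hvalx : ∀ x : Fin n → ℝ,
        (∑ i, |(L.mulVec x) i| ^ p) ^ (1/p) = ‖EQ (L.mulVec x)‖ := fun x => (hNp _).symm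
    have hBchar : ∀ y, y ∈ B ↔ M.mulVec y = M.mulVec x₀ :=
      fun y => ⟨fun hy => hBMeq y hy x₀ hx₀B, fun h => hBofEq x₀ hx₀B y h⟩
    have hv₀mem : M.mulVec ((v₀ : Fin n → ℝ)) = 0 := (hmemV _).1 v₀.2
    have hxstarB : x₀ + (v₀ : Fin n → ℝ) ∈ B := by
      rw [hBchar, Matrix.mulVec_add, hv₀mem, add_zero]
    have hxstarmin : ∀ y ∈ B,
        ‖EQ (L.mulVec (x₀ + (v₀ : Fin n → ℝ)))‖ ≤ ‖EQ (L.mulVec y)‖ := by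
      intro y hy
      have hyM : M.mulVec y = M.mulVec x₀ := (hBchar y).1 hy
      have hyV : y - x₀ ∈ V := by
        rw [hmemV, Matrix.mulVec_sub, hyM, sub_self]
      have hdec : y = x₀ + ((⟨y - x₀, hyV⟩ : V) : Fin n → ℝ) := by simp
      rw [← hval v₀, hdec, ← hval ⟨y - x₀, hyV⟩]
      exact hv₀ ⟨y - x₀, hyV⟩
    refine ⟨x₀ + (v₀ : Fin n → ℝ), ⟨hxstarB, ?_⟩, ?_⟩
    · intro y hy
      rw [hvalx, hvalx]
      exact hxstarmin y hy
    · -- uniqueness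
      intro y hy
      obtain ⟨hyB, hymin⟩ := hy
      set xs := x₀ + (v₀ : Fin n → ℝ) with hxs
      -- equal minimal values
      have h1 : ‖EQ (L.mulVec y)‖ ≤ ‖EQ (L.mulVec xs)‖ := by
        rw [← hvalx, ← hvalx]
        exact hymin xs hxstarB
      have h2 : ‖EQ (L.mulVec xs)‖ ≤ ‖EQ (L.mulVec y)‖ := hxstarmin y hyB
      have hμ : ‖EQ (L.mulVec y)‖ = ‖EQ (L.mulVec xs)‖ := le_antisymm h1 h2
      set μ := ‖EQ (L.mulVec y)‖ with hμdef
      -- midpoint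
      set z := (1/2 : ℝ) • (y + xs) with hzdef
      have hzB : z ∈ B := by
        rw [hBchar, hzdef, Matrix.mulVec_smul, Matrix.mulVec_add,
          (hBchar y).1 hyB, (hBchar xs).1 hxstarB]
        funext i
        simp only [Pi.smul_apply, Pi.add_apply, smul_eq_mul]
        ring
      have hLz : L.mulVec z = (1/2 : ℝ) • (L.mulVec y + L.mulVec xs) := by
        rw [hzdef, Matrix.mulVec_smul, Matrix.mulVec_add]
      have hzub : ‖EQ (L.mulVec z)‖ ≤ μ := by
        rw [hLz, _root_.map_smul, map_add]
        calc ‖(1/2 : ℝ) • (EQ (L.mulVec y) + EQ (L.mulVec xs))‖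
            = (1/2 : ℝ) * ‖EQ (L.mulVec y) + EQ (L.mulVec xs)‖ := by
              rw [norm_smul, Real.norm_eq_abs]
              norm_num
          _ ≤ (1/2 : ℝ) * (‖EQ (L.mulVec y)‖ + ‖EQ (L.mulVec xs)‖) := by
              have := norm_add_le (EQ (L.mulVec y)) (EQ (L.mulVec xs))
              linarith
          _ = μ := by rw [← hμ]; ring
      have hzlb : μ ≤ ‖EQ (L.mulVec z)‖ := by
        rw [hμdef, ← hvalx, ← hvalx]
        exact hymin z hzB
      have hzeq : ‖EQ (L.mulVec z)‖ = μ := le_antisymm hzub hzlb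
      -- pass to p-th powers
      have hsum_eq : ∀ x : Fin n → ℝ,
          ∑ i, |(L.mulVec x) i| ^ p = (‖EQ (L.mulVec x)‖) ^ p := by
        intro x
        have hnn : (0:ℝ) ≤ ∑ i, |(L.mulVec x) i| ^ p :=
          Finset.sum_nonneg fun i _ => Real.rpow_nonneg (abs_nonneg _) p
        rw [hNp, ← Real.rpow_mul hnn]
        have h : 1 / p * p = 1 := by field_simp
        rw [h, Real.rpow_one]
      -- equality of images under L
      have hLeq : L.mulVec y = L.mulVec xs := by
        by_contra hne
        have hex : ∃ i, L.mulVec y i ≠ L.mulVec xs i := by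
          by_contra hc
          push_neg at hc
          exact hne (funext hc)
        obtain ⟨i₀, hi₀⟩ := hex
        have hzi : ∀ i, (L.mulVec z) i = ((L.mulVec y) i + (L.mulVec xs) i) / 2 := by
          intro i
          rw [hLz]
          simp only [Pi.smul_apply, Pi.add_apply, smul_eq_mul]
          ring
        have hle : ∀ i ∈ Finset.univ, |(L.mulVec z) i| ^ p
            ≤ (|(L.mulVec y) i| ^ p + |(L.mulVec xs) i| ^ p) / 2 := by
          intro i _
          rw [hzi i]
          exact aux_rpow_conv' hp _ _
        have hlt : |(L.mulVec z) i₀| ^ p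
            < (|(L.mulVec y) i₀| ^ p + |(L.mulVec xs) i₀| ^ p) / 2 := by
          rw [hzi i₀]
          exact aux_rpow_strict hp hi₀
        have hstrict : ∑ i, |(L.mulVec z) i| ^ p
            < (∑ i, |(L.mulVec y) i| ^ p + ∑ i, |(L.mulVec xs) i| ^ p) / 2 := by
          calc ∑ i, |(L.mulVec z) i| ^ p
              < ∑ i, (|(L.mulVec y) i| ^ p + |(L.mulVec xs) i| ^ p) / 2 :=
                Finset.sum_lt_sum hle ⟨i₀, Finset.mem_univ i₀, hlt⟩
            _ = (∑ i, |(L.mulVec y) i| ^ p + ∑ i, |(L.mulVec xs) i| ^ p) / 2 := by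
                rw [← Finset.sum_div, Finset.sum_add_distrib]
        rw [hsum_eq z, hsum_eq y, hsum_eq xs, hzeq, ← hμdef, ← hμ] at hstrict
        linarith
      have hdiff : L.mulVec (y - xs) = 0 := by
        rw [Matrix.mulVec_sub, hLeq, sub_self]
      obtain ⟨t, ht⟩ := hspan _ hdiff
      have hMdiff : M.mulVec (y - xs) = 0 := by
        rw [Matrix.mulVec_sub, (hBchar y).1 hyB, (hBchar xs).1 hxstarB, sub_self]
      rw [ht] at hMdiff
      have ht0 := hsmul0 t hMdiff
      rw [ht0, zero_smul] at ht
      exact sub_eq_zero.1 ht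
end

section
/- Let A ∈ ℝ^{m×n}, b ∈ ℝ^m, and let W = [W_k, W_0] ∈ ℝ^{n×n} be orthogonal, with W_k ∈ ℝ^{n×k} and W_0 ∈ ℝ^{n×(n−k)}. Suppose A W_k has full column rank, and let y_k ∈ ℝ^k be the unique minimizer of y ↦ ‖(A W_k) y − b‖₂. Then the set B of minimizers over z ∈ ℝ^n of ‖(A W_k W_kᵀ) z − b‖₂ equals {W_k y_k + W_0 y : y ∈ ℝ^{n−k}}. -/
open Matrix

private lemma sq_sum_nonneg' {m : ℕ} (v : Fin m → ℝ) : 0 ≤ ∑ i, v i ^ 2 :=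
  Finset.sum_nonneg fun _ _ => sq_nonneg _

private lemma sqrt_sum_le_iff' {m : ℕ} (u v : Fin m → ℝ) :
    Real.sqrt (∑ i, u i ^ 2) ≤ Real.sqrt (∑ i, v i ^ 2) ↔
      ∑ i, u i ^ 2 ≤ ∑ i, v i ^ 2 := by
  constructor
  · intro h
    exact (Real.sqrt_le_sqrt_iff (sq_sum_nonneg' v)).mp h
  · intro h
    exact Real.sqrt_le_sqrt h

private lemma ls_unique' {m k : ℕ} (M : Matrix (Fin m) (Fin k) ℝ) (b : Fin m → ℝ)
    (hinj : Function.Injective M.mulVec) (yk y : Fin k → ℝ)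
    (hmin : ∀ y', ∑ i, (M.mulVec yk - b) i ^ 2 ≤ ∑ i, (M.mulVec y' - b) i ^ 2)
    (hy : ∑ i, (M.mulVec y - b) i ^ 2 ≤ ∑ i, (M.mulVec yk - b) i ^ 2) : y = yk := by
  set a := M.mulVec y - b with ha
  set c := M.mulVec yk - b with hc
  have hres : ∀ i, (M.mulVec ((2:ℝ)⁻¹ • (y + yk)) - b) i = (a i + c i) / 2 := by
    intro i
    simp only [ha, hc, Matrix.mulVec_smul, Matrix.mulVec_add, Pi.sub_apply, Pi.smul_apply,
      Pi.add_apply, smul_eq_mul]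
    ring
  have hm : ∑ i, (c i) ^ 2 ≤ ∑ i, ((a i + c i) / 2) ^ 2 := by
    have := hmin ((2:ℝ)⁻¹ • (y + yk))
    calc ∑ i, (c i) ^ 2 ≤ ∑ i, (M.mulVec ((2:ℝ)⁻¹ • (y + yk)) - b) i ^ 2 := this
      _ = ∑ i, ((a i + c i) / 2) ^ 2 := Finset.sum_congr rfl fun i _ => by rw [hres i]
  have par : ∑ i, (a i) ^ 2 + ∑ i, (c i) ^ 2 =
      2 * ∑ i, ((a i + c i) / 2) ^ 2 + 2 * ∑ i, ((a i - c i) / 2) ^ 2 := by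
    rw [← Finset.sum_add_distrib, Finset.mul_sum, Finset.mul_sum, ← Finset.sum_add_distrib]
    exact Finset.sum_congr rfl fun i _ => by ring
  have hd0 : ∑ i, ((a i - c i) / 2) ^ 2 ≤ 0 := by linarith [hy, hm, par]
  have hd : ∑ i, ((a i - c i) / 2) ^ 2 = 0 :=
    le_antisymm hd0 (Finset.sum_nonneg fun _ _ => sq_nonneg _)
  have hac : a = c := by
    funext i
    have := (Finset.sum_eq_zero_iff_of_nonneg
      (fun j _ => sq_nonneg ((a j - c j) / 2))).mp hd i (Finset.mem_univ i)
    have := pow_eq_zero_iff (two_ne_zero) |>.mp this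
    have : a i - c i = 0 := by
      field_simp at this
      linarith [this]
    linarith [this]
  apply hinj
  have : M.mulVec y - b = M.mulVec yk - b := hac
  funext i
  have := congrFun this i
  simp only [Pi.sub_apply] at this
  linarith [this]

/-- If `W = [W_k, W_0]` is orthogonal, `A W_k` has full column rank, and `y_k` is the
(unique) minimizer of `‖(A W_k) y - b‖₂`, then the set of minimizers of
`‖(A W_k W_kᵀ) z - b‖₂` equals `{W_k y_k + W_0 y : y}`. -/
theorem stmt_17 (m n k : ℕ)
    (A : Matrix (Fin m) (Fin n) ℝ) (b : Fin m → ℝ)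
    (Wk : Matrix (Fin n) (Fin k) ℝ) (W0 : Matrix (Fin n) (Fin (n - k)) ℝ)
    (hW : (Matrix.fromCols Wk W0)ᵀ * Matrix.fromCols Wk W0 = 1)
    (hrank : Function.Injective (A * Wk).mulVec)
    (yk : Fin k → ℝ)
    (hyk : ∀ y : Fin k → ℝ,
      Real.sqrt (∑ i, ((A * Wk).mulVec yk - b) i ^ 2) ≤
        Real.sqrt (∑ i, ((A * Wk).mulVec y - b) i ^ 2)) :
    {z : Fin n → ℝ | ∀ w : Fin n → ℝ,
        Real.sqrt (∑ i, ((A * Wk * Wkᵀ).mulVec z - b) i ^ 2) ≤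
          Real.sqrt (∑ i, ((A * Wk * Wkᵀ).mulVec w - b) i ^ 2)} =
      {x : Fin n → ℝ | ∃ y : Fin (n - k) → ℝ, x = Wk.mulVec yk + W0.mulVec y} := by
  classical
  -- block identities from WᵀW = 1
  have hW' : fromRows Wkᵀ W0ᵀ * fromCols Wk W0 = 1 := by
    rw [← transpose_fromCols]; exact hW
  rw [fromRows_mul_fromCols, ← fromBlocks_one] at hW'
  have hWk : Wkᵀ * Wk = 1 := by have := congrArg toBlocks₁₁ hW'; simpa [-Matrix.fromBlocks_one] using this
  have hkW0 : Wkᵀ * W0 = 0 := by have := congrArg toBlocks₁₂ hW'; simpa [-Matrix.fromBlocks_one] using this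
  -- injectivity of W, hence k + (n-k) ≤ n
  have hWinj : Function.Injective (fromCols Wk W0).mulVecLin := by
    intro x y hxy
    have h1 : (fromCols Wk W0)ᵀ.mulVec ((fromCols Wk W0).mulVec x)
        = (fromCols Wk W0)ᵀ.mulVec ((fromCols Wk W0).mulVec y) := by
      simp only [Matrix.mulVecLin_apply] at hxy
      rw [hxy]
    rw [mulVec_mulVec, mulVec_mulVec, hW] at h1
    simpa using h1
  have hcard : k + (n - k) ≤ n := by
    have h1 := LinearMap.finrank_le_finrank_of_injective hWinj
    simpa [Module.finrank_pi] using h1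
  have hkn : k + (n - k) = n := by omega
  have e : Fin k ⊕ Fin (n - k) ≃ Fin n := finSumFinEquiv.trans (finCongr hkn)
  -- W Wᵀ = 1
  have hfull' : fromCols Wk W0 * (fromCols Wk W0)ᵀ = 1 :=
    (mul_eq_one_comm_of_equiv e.symm).mpr hW
  have hfull : Wk * Wkᵀ + W0 * W0ᵀ = 1 := by
    rw [transpose_fromCols, fromCols_mul_fromRows] at hfull'; exact hfull'
  have hdecomp : ∀ z : Fin n → ℝ,
      Wk.mulVec (Wkᵀ.mulVec z) + W0.mulVec (W0ᵀ.mulVec z) = z := by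
    intro z
    rw [mulVec_mulVec, mulVec_mulVec, ← Matrix.add_mulVec, hfull, one_mulVec]
  -- auxiliary computational facts
  have hMz : ∀ v : Fin n → ℝ,
      (A * Wk * Wkᵀ).mulVec v = (A * Wk).mulVec (Wkᵀ.mulVec v) := fun v =>
    (mulVec_mulVec _ _ _).symm
  have hWky : ∀ y : Fin k → ℝ, Wkᵀ.mulVec (Wk.mulVec y) = y := by
    intro y; rw [mulVec_mulVec, hWk, one_mulVec]
  have hW0y : ∀ y : Fin (n - k) → ℝ, Wkᵀ.mulVec (W0.mulVec y) = 0 := by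
    intro y; rw [mulVec_mulVec, hkW0, zero_mulVec]
  have hMW : ∀ y : Fin k → ℝ,
      (A * Wk * Wkᵀ).mulVec (Wk.mulVec y) = (A * Wk).mulVec y := by
    intro y; rw [hMz, hWky]
  have hminQ : ∀ y : Fin k → ℝ,
      ∑ i, ((A * Wk).mulVec yk - b) i ^ 2 ≤ ∑ i, ((A * Wk).mulVec y - b) i ^ 2 := fun y =>
    (sqrt_sum_le_iff' _ _).mp (hyk y)
  ext z
  simp only [Set.mem_setOf_eq]
  constructor
  · intro hz
    have hz' : ∀ y : Fin k → ℝ,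
        ∑ i, ((A * Wk).mulVec (Wkᵀ.mulVec z) - b) i ^ 2 ≤
          ∑ i, ((A * Wk).mulVec y - b) i ^ 2 := by
      intro y
      have h1 := (sqrt_sum_le_iff' _ _).mp (hz (Wk.mulVec y))
      rw [hMz z, hMW y] at h1
      exact h1
    have heq : Wkᵀ.mulVec z = yk :=
      ls_unique' (A * Wk) b hrank yk (Wkᵀ.mulVec z) hminQ (hz' yk)
    refine ⟨W0ᵀ.mulVec z, ?_⟩
    have h2 := hdecomp z
    rw [heq] at h2
    exact h2.symm
  · rintro ⟨y, rfl⟩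
    intro w
    have hres : (A * Wk * Wkᵀ).mulVec (Wk.mulVec yk + W0.mulVec y)
        = (A * Wk).mulVec yk := by
      rw [Matrix.mulVec_add, hMW, hMz, hW0y, mulVec_zero, add_zero]
    rw [show (∑ i, ((A * Wk * Wkᵀ).mulVec (Wk.mulVec yk + W0.mulVec y) - b) i ^ 2)
        = ∑ i, ((A * Wk).mulVec yk - b) i ^ 2 from by rw [hres],
      show (∑ i, ((A * Wk * Wkᵀ).mulVec w - b) i ^ 2)
        = ∑ i, ((A * Wk).mulVec (Wkᵀ.mulVec w) - b) i ^ 2 from by rw [hMz]]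
    exact hyk (Wkᵀ.mulVec w)
end

section
/- Let p > 1, A ∈ ℝ^{m×n}, b ∈ ℝ^m, L ∈ ℝ^{l×n}, and let W = [W_k, W_0] ∈ ℝ^{n×n} be orthogonal, with W_k ∈ ℝ^{n×k} and W_0 ∈ ℝ^{n×(n−k)}. Suppose A W_k and L W_0 both have full column rank. Let y_k be the unique minimizer of y ↦ ‖(A W_k) y − b‖₂ and let y_0 be the unique minimizer of y ↦ ‖(L W_0) y − (−L W_k y_k)‖_p. Then x = W_k y_k + W_0 y_0 is the unique solution of min_{x ∈ B} ‖Lx‖_p, where B is the set of minimizers over z ∈ ℝ^n of ‖(A W_k W_kᵀ) z − b‖₂. -/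
open Matrix

private lemma l2_unique {m k : ℕ} (M : Matrix (Fin m) (Fin k) ℝ)
    (hM : Function.Injective M.mulVec) (b : Fin m → ℝ) (y y' : Fin k → ℝ)
    (h : ∀ w, ∑ i, (M.mulVec y - b) i ^ 2 ≤ ∑ i, (M.mulVec w - b) i ^ 2)
    (h' : ∀ w, ∑ i, (M.mulVec y' - b) i ^ 2 ≤ ∑ i, (M.mulVec w - b) i ^ 2) :
    y = y' := by
  apply hM
  set u := M.mulVec y - b with hu
  set v := M.mulVec y' - b with hv
  have hS : ∑ i, (v i) ^ 2 = ∑ i, (u i) ^ 2 := le_antisymm (h' y) (h y')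
  have hmidv : M.mulVec ((1/2 : ℝ) • (y + y')) - b = fun i => (u i + v i) / 2 := by
    funext i
    simp only [Matrix.mulVec_smul, Matrix.mulVec_add, hu, hv, Pi.sub_apply, Pi.smul_apply,
      Pi.add_apply, smul_eq_mul]
    ring
  have hmid := h ((1/2 : ℝ) • (y + y'))
  rw [hmidv] at hmid
  have expand : ∑ i, (u i - v i) ^ 2 =
      2 * ∑ i, (u i) ^ 2 + 2 * ∑ i, (v i) ^ 2 - 4 * ∑ i, ((u i + v i) / 2) ^ 2 := by
    rw [Finset.mul_sum, Finset.mul_sum, Finset.mul_sum, ← Finset.sum_add_distrib,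
      ← Finset.sum_sub_distrib]
    exact Finset.sum_congr rfl fun i _ => by ring
  have hle : ∑ i, (u i - v i) ^ 2 ≤ 0 := by
    rw [expand, hS]; linarith
  have hzero : ∀ i ∈ Finset.univ, (u i - v i) ^ 2 = 0 := by
    intro i _
    have hnn := Finset.sum_nonneg (fun j (_ : j ∈ Finset.univ) => sq_nonneg (u j - v j))
    have hsum : ∑ i, (u i - v i) ^ 2 = 0 := le_antisymm hle hnn
    exact (Finset.sum_eq_zero_iff_of_nonneg (fun j _ => sq_nonneg _)).mp hsum i (Finset.mem_univ i)
  funext i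
  have hz := hzero i (Finset.mem_univ i)
  have huv : u i = v i := by nlinarith [hz]
  have : (M.mulVec y) i - b i = (M.mulVec y') i - b i := huv
  linarith

private lemma abs_rpow_midpoint {p : ℝ} (hp : 1 < p) (a c : ℝ) (hne : a ≠ c) :
    |(a + c) / 2| ^ p < (|a| ^ p + |c| ^ p) / 2 := by
  rcases eq_or_ne |a| |c| with h | h
  · have ha : a = -c := by
      rcases abs_eq_abs.mp h with h1 | h1
      · exact absurd h1 hne
      · exact h1
    have hc : c ≠ 0 := by rintro rfl; simp [ha] at hne
    have h0 : (a + c) / 2 = 0 := by rw [ha]; ring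
    rw [h0, abs_zero, Real.zero_rpow (by positivity)]
    have h1 : 0 < |c| ^ p := Real.rpow_pos_of_pos (abs_pos.mpr hc) p
    have h2 : 0 < |a| ^ p :=
      Real.rpow_pos_of_pos (by rw [ha, abs_neg]; exact abs_pos.mpr hc) p
    linarith
  · have h1 : |(a + c) / 2| ≤ (|a| + |c|) / 2 := by
      rw [abs_div, abs_two]
      exact div_le_div_of_nonneg_right (abs_add_le a c) (by norm_num) |>.trans_eq rfl
    have h2 : |(a + c) / 2| ^ p ≤ ((|a| + |c|) / 2) ^ p :=
      Real.rpow_le_rpow (abs_nonneg _) h1 (by linarith)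
    have h3 := (strictConvexOn_rpow hp).2 (Set.mem_Ici.mpr (abs_nonneg a))
      (Set.mem_Ici.mpr (abs_nonneg c)) h (by norm_num : (0:ℝ) < 1/2)
      (by norm_num : (0:ℝ) < 1/2) (by norm_num)
    simp only [smul_eq_mul] at h3
    calc |(a + c) / 2| ^ p ≤ ((|a| + |c|) / 2) ^ p := h2
      _ = (1/2 * |a| + 1/2 * |c|) ^ p := by ring_nf
      _ < 1/2 * |a| ^ p + 1/2 * |c| ^ p := h3
      _ = (|a| ^ p + |c| ^ p) / 2 := by ring

private lemma lp_unique {m k : ℕ} {p : ℝ} (hp : 1 < p) (M : Matrix (Fin m) (Fin k) ℝ)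
    (hM : Function.Injective M.mulVec) (c : Fin m → ℝ) (y y' : Fin k → ℝ)
    (h : ∀ w, ∑ i, |(M.mulVec y - c) i| ^ p ≤ ∑ i, |(M.mulVec w - c) i| ^ p)
    (h' : ∀ w, ∑ i, |(M.mulVec y' - c) i| ^ p ≤ ∑ i, |(M.mulVec w - c) i| ^ p) :
    y = y' := by
  apply hM
  set u := M.mulVec y - c with hu
  set v := M.mulVec y' - c with hv
  have hS : ∑ i, |v i| ^ p = ∑ i, |u i| ^ p := le_antisymm (h' y) (h y')
  have hmidv : M.mulVec ((1/2 : ℝ) • (y + y')) - c = fun i => (u i + v i) / 2 := by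
    funext i
    simp only [Matrix.mulVec_smul, Matrix.mulVec_add, hu, hv, Pi.sub_apply, Pi.smul_apply,
      Pi.add_apply, smul_eq_mul]
    ring
  have hmid := h ((1/2 : ℝ) • (y + y'))
  rw [hmidv] at hmid
  by_contra hne
  have hex : ∃ j, u j ≠ v j := by
    by_contra hall
    push_neg at hall
    apply hne
    funext i
    have : (M.mulVec y) i - c i = (M.mulVec y') i - c i := hall i
    linarith
  obtain ⟨j, hj⟩ := hex
  have hlt : ∑ i, |(u i + v i) / 2| ^ p < ∑ i, (|u i| ^ p + |v i| ^ p) / 2 := by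
    apply Finset.sum_lt_sum (fun i _ => ?_) ⟨j, Finset.mem_univ j, abs_rpow_midpoint hp _ _ hj⟩
    rcases eq_or_ne (u i) (v i) with he | he
    · rw [he]
      have h2 : (v i + v i) / 2 = v i := by ring
      rw [h2]
      ring_nf
      nlinarith [Real.rpow_nonneg (abs_nonneg (v i)) p]
    · exact (abs_rpow_midpoint hp _ _ he).le
  have heq : ∑ i, (|u i| ^ p + |v i| ^ p) / 2 = ∑ i, |u i| ^ p := by
    rw [← Finset.sum_div, Finset.sum_add_distrib, hS]
    ring
  rw [heq] at hlt
  exact absurd hmid (not_le.mpr hlt)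

/-- Correctness of the EPP Algorithm: if `W = [W_k, W_0]` is orthogonal, `A W_k` and
`L W_0` have full column rank, `y_k` minimizes `‖(A W_k) y - b‖₂` and `y_0` minimizes
`‖(L W_0) y - (-L W_k y_k)‖_p`, then `x = W_k y_k + W_0 y_0` is the unique solution of
`min_{x ∈ B} ‖L x‖_p`, where `B` is the set of minimizers of `‖(A W_k W_kᵀ) z - b‖₂`. -/
theorem stmt_18 (m n k l : ℕ) (p : ℝ) (hp : 1 < p)
    (A : Matrix (Fin m) (Fin n) ℝ) (b : Fin m → ℝ)
    (L : Matrix (Fin l) (Fin n) ℝ)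
    (Wk : Matrix (Fin n) (Fin k) ℝ) (W0 : Matrix (Fin n) (Fin (n - k)) ℝ)
    (hW : (Matrix.fromCols Wk W0)ᵀ * Matrix.fromCols Wk W0 = 1)
    (hrankA : Function.Injective (A * Wk).mulVec)
    (hrankL : Function.Injective (L * W0).mulVec)
    (yk : Fin k → ℝ)
    (hyk : ∀ y : Fin k → ℝ,
      Real.sqrt (∑ i, ((A * Wk).mulVec yk - b) i ^ 2) ≤
        Real.sqrt (∑ i, ((A * Wk).mulVec y - b) i ^ 2))
    (y0 : Fin (n - k) → ℝ)
    (hy0 : ∀ y : Fin (n - k) → ℝ,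
      (∑ i, |((L * W0).mulVec y0 - (-(L.mulVec (Wk.mulVec yk)))) i| ^ p) ^ (1 / p) ≤
        (∑ i, |((L * W0).mulVec y - (-(L.mulVec (Wk.mulVec yk)))) i| ^ p) ^ (1 / p))
    (B : Set (Fin n → ℝ))
    (hB : B = {z : Fin n → ℝ | ∀ w : Fin n → ℝ,
      Real.sqrt (∑ i, ((A * Wk * Wkᵀ).mulVec z - b) i ^ 2) ≤
        Real.sqrt (∑ i, ((A * Wk * Wkᵀ).mulVec w - b) i ^ 2)})
    (x : Fin n → ℝ) (hx : x = Wk.mulVec yk + W0.mulVec y0) :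
    (x ∈ B ∧ ∀ z ∈ B,
        (∑ i, |(L.mulVec x) i| ^ p) ^ (1 / p) ≤ (∑ i, |(L.mulVec z) i| ^ p) ^ (1 / p)) ∧
      ∀ x' : Fin n → ℝ, (x' ∈ B ∧ ∀ z ∈ B,
          (∑ i, |(L.mulVec x') i| ^ p) ^ (1 / p) ≤ (∑ i, |(L.mulVec z) i| ^ p) ^ (1 / p)) →
        x' = x := by
  have hppos : (0 : ℝ) < p := lt_trans one_pos hp
  have hpinv : (0 : ℝ) < 1 / p := by positivity
  -- block identities
  have hW' := hW
  rw [transpose_fromCols, fromRows_mul_fromCols, ← fromBlocks_one] at hW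
  have h11 := congrArg Matrix.toBlocks₁₁ hW
  have h12 := congrArg Matrix.toBlocks₁₂ hW
  have h22 := congrArg Matrix.toBlocks₂₂ hW
  simp only [Matrix.toBlocks_fromBlocks₁₁, Matrix.toBlocks_fromBlocks₁₂,
    Matrix.toBlocks_fromBlocks₂₂] at h11 h12 h22
  have hWkinj : Function.Injective Wk.mulVec := by
    intro a b hab
    have := congrArg Wkᵀ.mulVec hab
    simpa [Matrix.mulVec_mulVec, h11, Matrix.one_mulVec] using this
  have hkn : k ≤ n := by
    have hinj : Function.Injective (Matrix.mulVecLin Wk) := by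
      intro a b hab
      exact hWkinj (by simpa using hab)
    have := LinearMap.finrank_le_finrank_of_injective hinj
    simpa [Module.finrank_fin_fun] using this
  have e : Fin k ⊕ Fin (n - k) ≃ Fin n :=
    finSumFinEquiv.trans (finCongr (Nat.add_sub_cancel' hkn))
  have hWW : Matrix.fromCols Wk W0 * (Matrix.fromCols Wk W0)ᵀ = 1 :=
    (Matrix.mul_eq_one_comm_of_equiv e).mp hW'
  rw [transpose_fromCols, fromCols_mul_fromRows] at hWW
  -- vector-level identities
  have hWk1 : ∀ v : Fin k → ℝ, Wkᵀ.mulVec (Wk.mulVec v) = v := by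
    intro v; rw [Matrix.mulVec_mulVec, h11, Matrix.one_mulVec]
  have hWkW0v : ∀ v : Fin (n - k) → ℝ, Wkᵀ.mulVec (W0.mulVec v) = 0 := by
    intro v; rw [Matrix.mulVec_mulVec, h12, Matrix.zero_mulVec]
  have hdecomp : ∀ z : Fin n → ℝ,
      Wk.mulVec (Wkᵀ.mulVec z) + W0.mulVec (W0ᵀ.mulVec z) = z := by
    intro z
    have := congrArg (fun M => M.mulVec z) hWW
    simpa [Matrix.add_mulVec, ← Matrix.mulVec_mulVec, Matrix.one_mulVec] using this
  have key : ∀ z : Fin n → ℝ,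
      (A * Wk * Wkᵀ).mulVec z = (A * Wk).mulVec (Wkᵀ.mulVec z) := fun z =>
    (Matrix.mulVec_mulVec z (A * Wk) Wkᵀ).symm
  -- sum-level minimality
  have hyk' : ∀ y : Fin k → ℝ,
      ∑ i, ((A * Wk).mulVec yk - b) i ^ 2 ≤ ∑ i, ((A * Wk).mulVec y - b) i ^ 2 := by
    intro y
    exact (Real.sqrt_le_sqrt_iff (by positivity)).mp (hyk y)
  have habs_nonneg : ∀ (j : ℕ) (v : Fin j → ℝ), 0 ≤ ∑ i, |v i| ^ p := by
    intro j v
    exact Finset.sum_nonneg fun i _ => Real.rpow_nonneg (abs_nonneg _) p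
  have hy0' : ∀ y : Fin (n - k) → ℝ,
      ∑ i, |((L * W0).mulVec y0 - (-(L.mulVec (Wk.mulVec yk)))) i| ^ p ≤
        ∑ i, |((L * W0).mulVec y - (-(L.mulVec (Wk.mulVec yk)))) i| ^ p := by
    intro y
    exact (Real.rpow_le_rpow_iff (habs_nonneg _ _) (habs_nonneg _ _) hpinv).mp (hy0 y)
  -- characterization of B
  have hBmem : ∀ z : Fin n → ℝ, z ∈ B ↔ Wkᵀ.mulVec z = yk := by
    intro z
    rw [hB]
    simp only [Set.mem_setOf_eq]
    constructor
    · intro hz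
      have hz' : ∀ w' : Fin k → ℝ,
          ∑ i, ((A * Wk).mulVec (Wkᵀ.mulVec z) - b) i ^ 2 ≤
            ∑ i, ((A * Wk).mulVec w' - b) i ^ 2 := by
        intro w'
        have h1 := hz (Wk.mulVec w')
        rw [key, key, hWk1] at h1
        exact (Real.sqrt_le_sqrt_iff (by positivity)).mp h1
      exact l2_unique (A * Wk) hrankA b _ yk hz' hyk'
    · intro hz w
      rw [key, key, hz]
      exact Real.sqrt_le_sqrt (hyk' (Wkᵀ.mulVec w))
  -- L applied to elements of B
  have hLz : ∀ z : Fin n → ℝ, Wkᵀ.mulVec z = yk →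
      L.mulVec z = (L * W0).mulVec (W0ᵀ.mulVec z) - (-(L.mulVec (Wk.mulVec yk))) := by
    intro z hzk
    conv_lhs => rw [← hdecomp z]
    rw [Matrix.mulVec_add, hzk, sub_neg_eq_add, add_comm, Matrix.mulVec_mulVec]
  have hWkx : Wkᵀ.mulVec x = yk := by
    rw [hx, Matrix.mulVec_add, hWk1, hWkW0v, add_zero]
  have hW0x : W0ᵀ.mulVec x = y0 := by
    have := hdecomp x
    nth_rewrite 2 [hx] at this
    have h2 := congrArg Wkᵀ.mulVec this
    -- simpler: directly compute
    rw [hx, Matrix.mulVec_add, Matrix.mulVec_mulVec, Matrix.mulVec_mulVec]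
    have h21 : W0ᵀ * Wk = 0 := by
      have := congrArg Matrix.toBlocks₂₁ hW
      simpa [Matrix.toBlocks_fromBlocks₂₁, -Matrix.fromBlocks_one] using this
    rw [h21, h22, Matrix.zero_mulVec, Matrix.one_mulVec, zero_add]
  have hxB : x ∈ B := (hBmem x).mpr hWkx
  have hLx : L.mulVec x =
      (L * W0).mulVec y0 - (-(L.mulVec (Wk.mulVec yk))) := by
    rw [hLz x hWkx, hW0x]
  -- minimality of x
  have hxmin : ∀ z ∈ B,
      (∑ i, |(L.mulVec x) i| ^ p) ^ (1 / p) ≤ (∑ i, |(L.mulVec z) i| ^ p) ^ (1 / p) := by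
    intro z hz
    rw [hLx, hLz z ((hBmem z).mp hz)]
    exact hy0 (W0ᵀ.mulVec z)
  refine ⟨⟨hxB, hxmin⟩, ?_⟩
  rintro x' ⟨hx'B, hx'min⟩
  have hWkx' : Wkᵀ.mulVec x' = yk := (hBmem x').mp hx'B
  have hLx' : L.mulVec x' =
      (L * W0).mulVec (W0ᵀ.mulVec x') - (-(L.mulVec (Wk.mulVec yk))) := hLz x' hWkx'
  have hx'full : ∀ w : Fin (n - k) → ℝ,
      ∑ i, |((L * W0).mulVec (W0ᵀ.mulVec x') - (-(L.mulVec (Wk.mulVec yk)))) i| ^ p ≤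
        ∑ i, |((L * W0).mulVec w - (-(L.mulVec (Wk.mulVec yk)))) i| ^ p := by
    intro w
    set z := Wk.mulVec yk + W0.mulVec w with hzdef
    have hzB : z ∈ B := by
      apply (hBmem z).mpr
      rw [hzdef, Matrix.mulVec_add, hWk1, hWkW0v, add_zero]
    have hzk : Wkᵀ.mulVec z = yk := (hBmem z).mp hzB
    have hW0z : W0ᵀ.mulVec z = w := by
      rw [hzdef, Matrix.mulVec_add, Matrix.mulVec_mulVec, Matrix.mulVec_mulVec]
      have h21 : W0ᵀ * Wk = 0 := by
        have := congrArg Matrix.toBlocks₂₁ hW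
        simpa [Matrix.toBlocks_fromBlocks₂₁, -Matrix.fromBlocks_one] using this
      rw [h21, h22, Matrix.zero_mulVec, Matrix.one_mulVec, zero_add]
    have h1 := hx'min z hzB
    rw [hLx', hLz z hzk, hW0z] at h1
    exact (Real.rpow_le_rpow_iff (habs_nonneg _ _) (habs_nonneg _ _) hpinv).mp h1
  have hW0x' : W0ᵀ.mulVec x' = y0 :=
    lp_unique hp (L * W0) hrankL (-(L.mulVec (Wk.mulVec yk))) _ y0 hx'full hy0'
  calc x' = Wk.mulVec (Wkᵀ.mulVec x') + W0.mulVec (W0ᵀ.mulVec x') := (hdecomp x').symm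
    _ = Wk.mulVec yk + W0.mulVec y0 := by rw [hWkx', hW0x']
    _ = x := hx.symm
end
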